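/- Let 𝓕 ⊆ ℕ² be a finitely generated submonoid, minimally generated by {g₁, …, g_p}, and let τ = ℚ_{≥0}·g₁ be an extremal ray of 𝓕 such that g₁ generates ℕ² ∩ τ (i.e., ℕ² ∩ τ = ℕ·g₁). Let s₁ = λ₁g₁, …, s_t = λ_tg₁ with integers 0 < λ₁ < ⋯ < λ_t generate a submonoid of ℕ·g₁. Let 𝓕' be the submonoid generated by B₁ ∪ B₂ where B₁ = {s₁,…,s_t, g₂,…,g_p} and B₂ = ⋃_{i=2}^p {g_i + j·g₁ : 1 ≤ j ≤ λ_t − 1}. Then 𝓕' ∩ τ = ⟨s₁,…,s_t⟩ and 𝓕' \ τ = 𝓕 \ τ. -/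

import Mathlib

/-- Replacing the generators of a finitely generated submonoid `𝓕 ⊆ ℕ²` along an
extremal ray `τ = ℚ_{≥0}·g₁` by a subsemigroup `⟨s₁,…,s_t⟩` of `ℕ·g₁` yields a
semigroup `𝓕'` with `𝓕' ∩ τ = ⟨s₁,…,s_t⟩` and `𝓕' \ τ = 𝓕 \ τ`. -/
theorem stmt7 (p t : ℕ) (g₁ : ℕ × ℕ) (gs : Fin p → ℕ × ℕ) (lam : Fin (t + 1) → ℕ)
    (F : AddSubmonoid (ℕ × ℕ))
    (τ : Set (ℕ × ℕ))
    (hτ : τ = {x | ∃ q : ℚ, 0 ≤ q ∧ (x.1 : ℚ) = q * g₁.1 ∧ (x.2 : ℚ) = q * g₁.2})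
    (hgen : F = AddSubmonoid.closure ({g₁} ∪ Set.range gs))
    (hminimal : ∀ x ∈ ({g₁} ∪ Set.range gs : Set (ℕ × ℕ)),
        x ∉ AddSubmonoid.closure (({g₁} ∪ Set.range gs : Set (ℕ × ℕ)) \ {x}))
    (hlat : ∀ x : ℕ × ℕ, x ∈ τ → ∃ n : ℕ, x = n • g₁)
    (hextr1 : ∀ x ∈ F, x ∈ τ → ∃ n : ℕ, x = n • g₁)
    (hextr2 : ∀ i, gs i ∉ τ)
    (hextr3 : ∀ x ∈ F, ∀ y ∈ F, x ∉ τ → x + y ∉ τ)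
    (hlam0 : 0 < lam 0) (hmono : StrictMono lam)
    (s : Fin (t + 1) → ℕ × ℕ) (hs : ∀ i, s i = lam i • g₁)
    (F' : AddSubmonoid (ℕ × ℕ))
    (hF' : F' = AddSubmonoid.closure (Set.range s ∪ Set.range gs ∪
        ⋃ i : Fin p, (fun j : ℕ => gs i + j • g₁) '' Set.Icc 1 (lam (Fin.last t) - 1))) :
    (F' : Set (ℕ × ℕ)) ∩ τ = ↑(AddSubmonoid.closure (Set.range s)) ∧
    (F' : Set (ℕ × ℕ)) \ τ = (F : Set (ℕ × ℕ)) \ τ := by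
  -- basic memberships
  have hg₁F : g₁ ∈ F := by
    rw [hgen]; exact AddSubmonoid.subset_closure (Or.inl rfl)
  have hgsF : ∀ i, gs i ∈ F := fun i => by
    rw [hgen]; exact AddSubmonoid.subset_closure (Or.inr ⟨i, rfl⟩)
  have hsmulτ : ∀ n : ℕ, n • g₁ ∈ τ := by
    intro n
    rw [hτ]
    exact ⟨n, by positivity, by push_cast [Prod.smul_fst, smul_eq_mul]; ring,
      by push_cast [Prod.smul_snd, smul_eq_mul]; ring⟩
  have hsmulF : ∀ n : ℕ, n • g₁ ∈ F := fun n => nsmul_mem hg₁F n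
  have hB2notτ : ∀ (i) (j : ℕ), gs i + j • g₁ ∉ τ := fun i j =>
    hextr3 (gs i) (hgsF i) (j • g₁) (hsmulF j) (hextr2 i)
  have hF'leF : F' ≤ F := by
    rw [hF']
    refine AddSubmonoid.closure_le.2 ?_
    rintro x (⟨⟨i, rfl⟩ | ⟨i, rfl⟩⟩ | hx)
    · rw [hs i]; exact hsmulF _
    · exact hgsF i
    · simp only [Set.mem_iUnion, Set.mem_image] at hx
      obtain ⟨i, j, -, rfl⟩ := hx
      exact add_mem (hgsF i) (hsmulF j)
  have hsub : (Set.range s : Set (ℕ × ℕ)) ⊆ (Set.range s ∪ Set.range gs ∪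
        ⋃ i : Fin p, (fun j : ℕ => gs i + j • g₁) '' Set.Icc 1 (lam (Fin.last t) - 1)) :=
    fun x hx => Or.inl (Or.inl hx)
  have hSleF' : AddSubmonoid.closure (Set.range s) ≤ F' := by
    rw [hF']; exact AddSubmonoid.closure_mono hsub
  have hSτ : ∀ x ∈ AddSubmonoid.closure (Set.range s), x ∈ τ := by
    intro x hx
    have : x ∈ AddSubmonoid.closure ({g₁} : Set (ℕ × ℕ)) := by
      refine AddSubmonoid.closure_le.2 ?_ hx
      rintro y ⟨i, rfl⟩
      exact AddSubmonoid.mem_closure_singleton.2 ⟨lam i, (hs i).symm⟩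
    obtain ⟨n, rfl⟩ := AddSubmonoid.mem_closure_singleton.1 this
    exact hsmulτ n
  constructor
  · ext x
    constructor
    · rintro ⟨hxF', hxτ⟩
      rw [hF'] at hxF'
      induction hxF' using AddSubmonoid.closure_induction with
      | mem y hy =>
        rcases hy with (⟨i, rfl⟩ | ⟨i, rfl⟩) | hy
        · exact AddSubmonoid.subset_closure ⟨i, rfl⟩
        · exact absurd hxτ (hextr2 i)
        · simp only [Set.mem_iUnion, Set.mem_image] at hy
          obtain ⟨i, j, -, rfl⟩ := hy
          exact absurd hxτ (hB2notτ i j)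
      | zero => exact zero_mem _
      | add a b ha hb iha ihb =>
        have haF : a ∈ F := hF'leF (by rw [hF']; exact ha)
        have hbF : b ∈ F := hF'leF (by rw [hF']; exact hb)
        have haτ : a ∈ τ := by
          by_contra h
          exact hextr3 a haF b hbF h hxτ
        have hbτ : b ∈ τ := by
          by_contra h
          exact hextr3 b hbF a haF h (add_comm a b ▸ hxτ)
        exact add_mem (iha haτ) (ihb hbτ)
    · intro hx
      exact ⟨hSleF' hx, hSτ x hx⟩
  · ext x
    constructor
    · rintro ⟨hx, hxτ⟩
      exact ⟨hF'leF hx, hxτ⟩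
    · rintro ⟨hxF, hxτ⟩
      refine ⟨?_, hxτ⟩
      -- decompose x = a • g₁ + y with y ∈ closure (range gs)
      rw [hgen, SetLike.mem_coe, AddSubmonoid.closure_union, AddSubmonoid.mem_sup] at hxF
      obtain ⟨u, hu, y, hy, rfl⟩ := hxF
      obtain ⟨a, rfl⟩ := AddSubmonoid.mem_closure_singleton.1 hu
      -- peel a generator off y
      have peel : ∀ y ∈ AddSubmonoid.closure (Set.range gs), y = 0 ∨
          ∃ i y', y' ∈ AddSubmonoid.closure (Set.range gs) ∧ y = gs i + y' := by
        intro y hy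
        induction hy using AddSubmonoid.closure_induction with
        | mem z hz =>
          obtain ⟨i, rfl⟩ := hz
          exact Or.inr ⟨i, 0, zero_mem _, (add_zero _).symm⟩
        | zero => exact Or.inl rfl
        | add z w hz hw ihz ihw =>
          rcases ihz with rfl | ⟨i, y', hy', rfl⟩
          · rcases ihw with rfl | ⟨i, y', hy', rfl⟩
            · exact Or.inl (zero_add 0)
            · exact Or.inr ⟨i, y', hy', by rw [zero_add]⟩
          · exact Or.inr ⟨i, y' + w, add_mem hy' hw, by rw [add_assoc]⟩
      rcases peel y hy with rfl | ⟨i, y', hy', rfl⟩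
      · exact absurd (by simpa using hsmulτ a) hxτ
      have hgsleF' : AddSubmonoid.closure (Set.range gs) ≤ F' := by
        rw [hF']; exact AddSubmonoid.closure_mono (fun z hz => Or.inl (Or.inr hz))
      have hgF' : ∀ i, gs i ∈ F' := fun i => by
        rw [hF']; exact AddSubmonoid.subset_closure (Or.inl (Or.inr ⟨i, rfl⟩))
      set L := lam (Fin.last t) with hLdef
      have hL : 0 < L := lt_of_lt_of_le hlam0 (hmono.monotone (Fin.zero_le _))
      have hslast : s (Fin.last t) ∈ F' := by
        rw [hF']; exact AddSubmonoid.subset_closure (Or.inl (Or.inl ⟨_, rfl⟩))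
      have hdecomp : a • g₁ = (a / L) • s (Fin.last t) + (a % L) • g₁ := by
        conv_lhs => rw [← Nat.div_add_mod a L]
        rw [add_smul, hs, smul_smul, ← hLdef, Nat.mul_comm]
      rcases Nat.eq_zero_or_pos (a % L) with hr | hr
      · have heq : a • g₁ + (gs i + y') = (a / L) • s (Fin.last t) + gs i + y' := by
          rw [hdecomp, hr, zero_smul, add_zero, add_assoc]
        rw [heq]
        exact add_mem (add_mem (nsmul_mem hslast _) (hgF' i)) (hgsleF' hy')
      · have hrlt : a % L < L := Nat.mod_lt a hL
        have hmem : gs i + (a % L) • g₁ ∈ F' := by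
          rw [hF']
          refine AddSubmonoid.subset_closure (Or.inr ?_)
          exact Set.mem_iUnion.2 ⟨i, ⟨a % L, ⟨hr, by omega⟩, rfl⟩⟩
        have heq : a • g₁ + (gs i + y') =
            (a / L) • s (Fin.last t) + (gs i + (a % L) • g₁) + y' := by
          rw [hdecomp]; abel
        rw [heq]
        exact add_mem (add_mem (nsmul_mem hslast _) hmem) (hgsleF' hy')
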